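/- Let c = Σ_{k≥0} k! x1^k be the Ferfera series and for n ≥ 1 define the polynomial a_n := Σ_{η ∈ X*, deg(η) = n} (S a_η)(−c) · η, i.e., the degree-n homogeneous component of the group inverse (−c)^{∘−1}. Then for continuous functions α, β on [0, ω] and u := {u0 = α, u1 = β}, the functions a_n(t) := F_{a_n}[u](t) are exactly the coefficient functions of the formal power series solution Φ(t; 0; r; u) = Σ_{n≥1} a_n(t) r^n of the Abel equation ż(t) = α(t) z³(t) + β(t) z²(t) with z(0) = r, where a_1(0) = 1 and a_n(0) = 0 for n > 1. -/

import Mathlib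

open scoped TensorProduct

noncomputable section

namespace Paper

/-- Words over the alphabet `X = {x0, x1}`, encoded as lists over `Fin 2`
(`0` stands for the letter `x0` and `1` for the letter `x1`). -/
abbrev Word : Type := List (Fin 2)

/-- Formal power series `ℝ⟨⟨X⟩⟩`, given by their coefficient functions `η ↦ ⟨c,η⟩`. -/
abbrev Series : Type := Word → ℝ

/-- The left shift `x_i⁻¹(c)`. -/
def lshift (i : Fin 2) (c : Series) : Series := fun w => c (i :: w)

/-- Left concatenation `x_i c` of the letter `x_i` onto every word of `c`. -/
def lconcat (i : Fin 2) (c : Series) : Series := fun w =>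
  match w with
  | [] => 0
  | j :: v => if j = i then c v else 0

/-- Right concatenation `p x_i` of the letter `x_i` onto every word of `p`. -/
def rconcat {R : Type*} [Zero R] (i : Fin 2) (p : Word → R) : Word → R := fun w =>
  if w.getLast? = some i then p w.dropLast else 0

/-- The series of a single word. -/
def ind (η : Word) : Series := fun w => if w = η then 1 else 0

/-- The empty word as a series, the unit `∅` (often written `1`). -/
def one : Series := ind []

/-- The shuffle product, defined coefficientwise by the recursion
`⟨c ⧢ d, ∅⟩ = ⟨c,∅⟩⟨d,∅⟩` and `⟨c ⧢ d, x_i w⟩ = ⟨x_i⁻¹(c) ⧢ d, w⟩ + ⟨c ⧢ x_i⁻¹(d), w⟩`,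
which is the bilinear (and ultrametrically continuous) extension of the recursive
shuffle product of words. -/
def shuffleFn : Series → Series → Word → ℝ
  | c, d, [] => c [] * d []
  | c, d, i :: w => shuffleFn (lshift i c) d w + shuffleFn c (lshift i d) w

/-- The shuffle product on `ℝ⟨⟨X⟩⟩`. -/
def sh (c d : Series) : Series := shuffleFn c d

/-- The map `φ_d(x_i)` for the modified composition product:
`φ_d(x0)(e) = x0 e` and `φ_d(x1)(e) = x1 e + x0 (d ⧢ e)`. -/
def phiLetter (d : Series) (i : Fin 2) (e : Series) : Series :=
  if i = 0 then lconcat 0 e else lconcat 1 e + lconcat 0 (sh d e)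

/-- `φ_d(η)`, the algebra-homomorphism extension determined by
`φ_d(x_i η) = φ_d(x_i) ∘ φ_d(η)` and `φ_d(∅) = id`. -/
def phi (d : Series) : Word → Series → Series
  | [], e => e
  | i :: η, e => phiLetter d i (phi d η e)

/-- The modified composition product `c ∘̃ d = Σ_η ⟨c,η⟩ φ_d(η)(1)`. -/
def mcomp (c d : Series) : Series := fun w => ∑' η : Word, c η * phi d η one w

/-- The map `ψ_d(x_i)` for the composition product:
`ψ_d(x0)(e) = x0 e` and `ψ_d(x1)(e) = x0 (d ⧢ e)`. -/
def psiLetter (d : Series) (i : Fin 2) (e : Series) : Series :=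
  if i = 0 then lconcat 0 e else lconcat 0 (sh d e)

/-- `ψ_d(η)`, determined by `ψ_d(x_i η) = ψ_d(x_i) ∘ ψ_d(η)` and `ψ_d(∅) = id`. -/
def psi (d : Series) : Word → Series → Series
  | [], e => e
  | i :: η, e => psiLetter d i (psi d η e)

/-- The composition product `c ∘ d = Σ_η ⟨c,η⟩ ψ_d(η)(1)`. -/
def comp (c d : Series) : Series := fun w => ∑' η : Word, c η * psi d η one w

/-- The group operation on `ℝ⟨⟨X_δ⟩⟩ = {δ + c}`, transported to the `c`-parts:
`c_δ ∘ d_δ = δ + (d + c ∘̃ d)`. -/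
def gop (c d : Series) : Series := d + mcomp c d

/-- The Ferfera series `c = Σ_{k ≥ 0} k! x1^k`. -/
def ferfera : Series := fun w =>
  if w = List.replicate w.length (1 : Fin 2) then (Nat.factorial w.length : ℝ) else 0

/-- The degree of a word, `deg(η) = 2|η|_{x0} + |η|_{x1} + 1`. -/
def degW (η : Word) : ℕ := 2 * η.count 0 + η.count 1 + 1

/-- The output feedback Hopf algebra `H`: the free unital commutative `ℝ`-algebra on the
coordinate functions `a_η`, realized as polynomials in commuting variables indexed by words. -/
abbrev H : Type := MvPolynomial Word ℝ

/-- The coordinate function `a_η`. -/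
def aw (η : Word) : H := MvPolynomial.X η

/-- Character (pointwise) evaluation of elements of `H` at a series `c`:
`(a_{η₁} ⋯ a_{η_l})(c) = ⟨c,η₁⟩ ⋯ ⟨c,η_l⟩`, extended as an algebra map. -/
def evalS (c : Series) : H →ₐ[ℝ] ℝ := MvPolynomial.aeval c

/-- Evaluation of `H ⊗ H` at a pair of series: `(p ⊗ q)(c,d) = p(c) q(d)`. -/
def evalPair (c d : Series) : H ⊗[ℝ] H →ₗ[ℝ] ℝ :=
  (LinearMap.mul' ℝ ℝ).comp (TensorProduct.map (evalS c).toLinearMap (evalS d).toLinearMap)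

/-- The counit `ε` of `H`: `ε(a_η) = 0`, `ε(1) = 1`. -/
def counit : H →ₐ[ℝ] ℝ := evalS 0

/-- The defining property of the full coproduct `Δ` of the output feedback Hopf algebra:
`Δ a_η = Δ̃ a_η + 1 ⊗ a_η` where `Δ̃ a_η (c,d) = ⟨c ∘̃ d, η⟩`, i.e.
`(Δ a_η)(c,d) = ⟨c ∘̃ d, η⟩ + ⟨d, η⟩` for all series `c, d`; `Δ` is an algebra morphism. -/
def IsFBCoproduct (Δ : H →ₐ[ℝ] (H ⊗[ℝ] H)) : Prop :=
  ∀ (η : Word) (c d : Series), evalPair c d (Δ (aw η)) = mcomp c d η + d η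

/-- `S` is an antipode for the coproduct `Δ` (with counit `ε`):
`μ ∘ (S ⊗ id) ∘ Δ = 1·ε = μ ∘ (id ⊗ S) ∘ Δ`. -/
def IsAntipode (Δ : H →ₐ[ℝ] (H ⊗[ℝ] H)) (S : H →ₗ[ℝ] H) : Prop :=
  (∀ p : H, LinearMap.mul' ℝ H (TensorProduct.map S LinearMap.id (Δ p)) = counit p • 1) ∧
  (∀ p : H, LinearMap.mul' ℝ H (TensorProduct.map LinearMap.id S (Δ p)) = counit p • 1)

/-- The right-augmentation operator `θ̃_i`, the derivation on `H` with `θ̃_i(a_η) = a_{η x_i}`. -/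
def thetaR (i : Fin 2) : Derivation ℝ H H :=
  MvPolynomial.mkDerivation ℝ fun η => aw (η ++ [i])

/-- The left-augmentation operator `θ_i`, the derivation on `H` with `θ_i(a_η) = a_{x_i η}`. -/
def thetaL (i : Fin 2) : Derivation ℝ H H :=
  MvPolynomial.mkDerivation ℝ fun η => aw (i :: η)

/-- The multiplication operator `κ_∅(h) = h · a_∅`. -/
def kappaE : H →ₗ[ℝ] H := LinearMap.mulRight ℝ (aw [])

/-- The shuffle coefficient `⟨ξ ⧢ ν, η⟩`. -/
def shCoeff (ξ ν η : Word) : ℝ := sh (ind ξ) (ind ν) η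

/-- The finite set of words of length `n`. -/
def wordsLen (n : ℕ) : Finset Word :=
  (Finset.univ : Finset (Fin n → Fin 2)).image List.ofFn

/-- The deshuffle coproduct `Δ_⧢ a_η = Σ_{ξ,ν} ⟨ξ ⧢ ν, η⟩ a_ξ ⊗ a_ν`
(the unique coproduct satisfying `Δ_⧢ a_∅ = a_∅ ⊗ a_∅` and the coderivation recursions
with respect to the augmentation operators). -/
def deshuffle (η : Word) : H ⊗[ℝ] H :=
  ∑ k ∈ Finset.range (η.length + 1), ∑ ξ ∈ wordsLen k, ∑ ν ∈ wordsLen (η.length - k),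
    shCoeff ξ ν η • (aw ξ ⊗ₜ[ℝ] aw ν)

/-- Iterated integrals: `E_∅[u](t) = 1`, `E_{x_i η}[u](t) = ∫₀ᵗ u_i(s) E_η[u](s) ds`. -/
def E (u : Fin 2 → ℝ → ℝ) : Word → ℝ → ℝ
  | [], _ => 1
  | i :: η, t => ∫ s in (0:ℝ)..t, u i s * E u η s

/-! ### Words of bounded length -/

def WU : ℕ → Finset Word
  | 0 => {([] : Word)}
  | n+1 => insert ([] : Word) (((WU n).image (List.cons 0)) ∪ ((WU n).image (List.cons 1)))

lemma mem_WU {n : ℕ} {w : Word} : w ∈ WU n ↔ w.length ≤ n := by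
  induction n generalizing w with
  | zero =>
    simp only [WU, Finset.mem_singleton, Nat.le_zero, List.length_eq_zero_iff]
  | succ n ih =>
    cases w with
    | nil => simp [WU]
    | cons i v =>
      simp only [WU, Finset.mem_insert, Finset.mem_union, Finset.mem_image,
        List.length_cons, Nat.succ_le_succ_iff]
      constructor
      · rintro (h | ⟨a, ha, heq⟩ | ⟨a, ha, heq⟩)
        · cases h
        · injection heq with h1 h2; subst h2; exact ih.mp ha
        · injection heq with h1 h2; subst h2; exact ih.mp ha
      · intro hv
        have hi : i = 0 ∨ i = 1 := by fin_cases i <;> simp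
        rcases hi with rfl | rfl
        · exact Or.inr (Or.inl ⟨v, ih.mpr hv, rfl⟩)
        · exact Or.inr (Or.inr ⟨v, ih.mpr hv, rfl⟩)

lemma sum_WU_succ {M : Type*} [AddCommMonoid M] (n : ℕ) (g : Word → M) :
    ∑ w ∈ WU (n+1), g w
      = g [] + ((∑ τ ∈ WU n, g (0 :: τ)) + ∑ τ ∈ WU n, g (1 :: τ)) := by
  have h0 : ([] : Word) ∉ ((WU n).image (List.cons 0)) ∪ ((WU n).image (List.cons 1)) := by
    simp
  have hdisj : Disjoint ((WU n).image (List.cons 0)) ((WU n).image (List.cons 1)) := by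
    rw [Finset.disjoint_left]
    rintro a ha hb
    simp only [Finset.mem_image] at ha hb
    obtain ⟨x, _, rfl⟩ := ha
    obtain ⟨y, _, h⟩ := hb
    cases h
  rw [show WU (n+1) = insert ([] : Word)
      (((WU n).image (List.cons 0)) ∪ ((WU n).image (List.cons 1))) from rfl,
    Finset.sum_insert h0, Finset.sum_union hdisj,
    Finset.sum_image (by intro x _ y _ h; injection h),
    Finset.sum_image (by intro x _ y _ h; injection h)]

/-- The degree of a word without the `+1` normalization. -/
def degw (η : Word) : ℕ := 2 * η.count 0 + η.count 1

lemma degW_eq (η : Word) : degW η = degw η + 1 := rfl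

lemma degw_nil : degw ([] : Word) = 0 := rfl

lemma degw_cons (i : Fin 2) (v : Word) :
    degw (i :: v) = (if i = 0 then 2 else 1) + degw v := by
  have hi : i = 0 ∨ i = 1 := by fin_cases i <;> simp
  rcases hi with rfl | rfl <;> simp [degw, List.count_cons] <;> ring

lemma length_le_degw (η : Word) : η.length ≤ degw η := by
  induction η with
  | nil => simp [degw_nil]
  | cons i v ih =>
    rw [degw_cons]
    have : (1:ℕ) ≤ if i = 0 then 2 else 1 := by split <;> omega
    simp only [List.length_cons]; omega

lemma degw_le_two_mul_length (η : Word) : degw η ≤ 2 * η.length := by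
  induction η with
  | nil => simp [degw_nil]
  | cons i v ih =>
    rw [degw_cons]
    have : (if i = 0 then 2 else 1 : ℕ) ≤ 2 := by split <;> omega
    simp only [List.length_cons]; omega

/-! ### Shuffle product basics -/

lemma sh_nil (c d : Series) : sh c d [] = c [] * d [] := rfl

lemma sh_cons (c d : Series) (i : Fin 2) (w : Word) :
    sh c d (i :: w) = sh (lshift i c) d w + sh c (lshift i d) w := rfl

lemma lshift_zero (i : Fin 2) : lshift i (0 : Series) = 0 := rfl

lemma lshift_add (i : Fin 2) (a b : Series) :
    lshift i (a + b) = lshift i a + lshift i b := rfl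

lemma lshift_neg (i : Fin 2) (a : Series) : lshift i (-a) = -(lshift i a) := rfl

lemma lshift_smul (i : Fin 2) (r : ℝ) (a : Series) :
    lshift i (r • a) = r • lshift i a := rfl

lemma sh_zero_left : ∀ (w : Word) (d : Series), sh 0 d w = 0
  | [], d => by simp [sh_nil]
  | i :: w, d => by
      rw [sh_cons, lshift_zero, sh_zero_left w d, sh_zero_left w (lshift i d), add_zero]

lemma sh_zero_right : ∀ (w : Word) (c : Series), sh c 0 w = 0
  | [], c => by simp [sh_nil]
  | i :: w, c => by
      rw [sh_cons, lshift_zero, sh_zero_right w c, sh_zero_right w (lshift i c), add_zero]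

lemma sh_add_left : ∀ (w : Word) (a a' b : Series),
    sh (a + a') b w = sh a b w + sh a' b w
  | [], a, a', b => by simp [sh_nil]; ring
  | i :: w, a, a', b => by
      rw [sh_cons, lshift_add, sh_add_left w, sh_add_left w, sh_cons, sh_cons]; ring

lemma sh_add_right : ∀ (w : Word) (a b b' : Series),
    sh a (b + b') w = sh a b w + sh a b' w
  | [], a, b, b' => by simp [sh_nil]; ring
  | i :: w, a, b, b' => by
      rw [sh_cons, lshift_add, sh_add_right w, sh_add_right w, sh_cons, sh_cons]; ring

lemma sh_neg_left : ∀ (w : Word) (a b : Series), sh (-a) b w = -(sh a b w)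
  | [], a, b => by simp [sh_nil]
  | i :: w, a, b => by
      rw [sh_cons, lshift_neg, sh_neg_left w, sh_neg_left w, sh_cons]; ring

lemma sh_smul_left : ∀ (w : Word) (r : ℝ) (a b : Series),
    sh (r • a) b w = r * sh a b w
  | [], r, a, b => by simp [sh_nil]; ring
  | i :: w, r, a, b => by
      rw [sh_cons, lshift_smul, sh_smul_left w, sh_smul_left w, sh_cons]; ring

lemma sh_smul_right : ∀ (w : Word) (r : ℝ) (a b : Series),
    sh a (r • b) w = r * sh a b w
  | [], r, a, b => by simp [sh_nil]; ring
  | i :: w, r, a, b => by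
      rw [sh_cons, lshift_smul, sh_smul_right w, sh_smul_right w, sh_cons]; ring

lemma sh_comm : ∀ (w : Word) (a b : Series), sh a b w = sh b a w
  | [], a, b => by simp [sh_nil]; ring
  | i :: w, a, b => by
      rw [sh_cons, sh_cons, sh_comm w (lshift i a) b, sh_comm w a (lshift i b)]; ring

lemma sh_assoc : ∀ (w : Word) (a b c : Series),
    sh (sh a b) c w = sh a (sh b c) w
  | [], a, b, c => by simp [sh_nil]; ring
  | i :: w, a, b, c => by
      have hl : lshift i (sh a b) = sh (lshift i a) b + sh a (lshift i b) := by
        funext v; exact sh_cons a b i v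
      have hr : lshift i (sh b c) = sh (lshift i b) c + sh b (lshift i c) := by
        funext v; exact sh_cons b c i v
      rw [sh_cons, hl, sh_add_left, sh_cons, hr, sh_add_right,
        sh_assoc w (lshift i a) b c, sh_assoc w a (lshift i b) c,
        sh_assoc w a b (lshift i c)]
      ring

lemma sh_sum_left {ι : Type*} (s : Finset ι) (f : ι → Series) (b : Series) (w : Word) :
    sh (∑ x ∈ s, f x) b w = ∑ x ∈ s, sh (f x) b w := by
  classical
  induction s using Finset.induction_on with
  | empty => simpa using sh_zero_left w b
  | insert _ _ hx ih =>
      rw [Finset.sum_insert hx, Finset.sum_insert hx, sh_add_left, ih]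

lemma sh_sum_right {ι : Type*} (s : Finset ι) (a : Series) (f : ι → Series) (w : Word) :
    sh a (∑ x ∈ s, f x) w = ∑ x ∈ s, sh a (f x) w := by
  classical
  induction s using Finset.induction_on with
  | empty => simpa using sh_zero_right w a
  | insert _ _ hx ih =>
      rw [Finset.sum_insert hx, Finset.sum_insert hx, sh_add_right, ih]

/-- Shuffling only depends on the values on words of length at most the target length. -/
lemma sh_congr : ∀ (w : Word) (a a' b b' : Series),
    (∀ v : Word, v.length ≤ w.length → a v = a' v) →
    (∀ v : Word, v.length ≤ w.length → b v = b' v) →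
    sh a b w = sh a' b' w
  | [], a, a', b, b', ha, hb => by
      rw [sh_nil, sh_nil, ha [] (by simp), hb [] (by simp)]
  | i :: w, a, a', b, b', ha, hb => by
      rw [sh_cons, sh_cons]
      rw [sh_congr w (lshift i a) (lshift i a') b b'
          (fun v hv => ha (i :: v) (by simpa using Nat.succ_le_succ hv))
          (fun v hv => hb v (le_trans hv (by simp))),
        sh_congr w a a' (lshift i b) (lshift i b')
          (fun v hv => ha v (le_trans hv (by simp)))
          (fun v hv => hb (i :: v) (by simpa using Nat.succ_le_succ hv))]

/-- Support lemma: a nonzero shuffle coefficient comes from nonzero coefficients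
whose degrees and lengths add up. -/
lemma sh_supp : ∀ (w : Word) (a b : Series), sh a b w ≠ 0 →
    ∃ v1 v2 : Word, a v1 ≠ 0 ∧ b v2 ≠ 0 ∧ degw v1 + degw v2 = degw w ∧
      v1.length + v2.length = w.length
  | [], a, b, h => by
      rw [sh_nil] at h
      exact ⟨[], [], fun h0 => h (by rw [h0]; ring), fun h0 => h (by rw [h0]; ring),
        by simp [degw_nil], by simp⟩
  | i :: w, a, b, h => by
      rw [sh_cons] at h
      have hor : sh (lshift i a) b w ≠ 0 ∨ sh a (lshift i b) w ≠ 0 := by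
        by_contra hc
        push_neg at hc
        exact h (by rw [hc.1, hc.2, add_zero])
      rcases hor with h1 | h1
      · obtain ⟨v1, v2, hv1, hv2, hdeg, hlen⟩ := sh_supp w _ _ h1
        exact ⟨i :: v1, v2, hv1, hv2,
          by rw [degw_cons, degw_cons]; omega,
          by simp only [List.length_cons]; omega⟩
      · obtain ⟨v1, v2, hv1, hv2, hdeg, hlen⟩ := sh_supp w _ _ h1
        exact ⟨v1, i :: v2, hv1, hv2,
          by rw [degw_cons, degw_cons]; omega,
          by simp only [List.length_cons]; omega⟩

/-! ### ind, one, lconcat, phi basics -/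

lemma ind_self (w : Word) : ind w w = 1 := by simp [ind]

lemma ind_ne {η w : Word} (h : w ≠ η) : ind η w = 0 := by simp [ind, h]

lemma one_nil : one ([] : Word) = 1 := by simp [one, ind]

lemma one_cons (i : Fin 2) (v : Word) : one (i :: v) = 0 := by simp [one, ind]

lemma lconcat_nil (i : Fin 2) (c : Series) : lconcat i c [] = 0 := rfl

lemma lconcat_cons (i j : Fin 2) (c : Series) (v : Word) :
    lconcat i c (j :: v) = if j = i then c v else 0 := rfl

lemma phi_nil (d : Series) (e : Series) : phi d [] e = e := rfl

lemma phi_cons (d : Series) (i : Fin 2) (η : Word) (e : Series) :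
    phi d (i :: η) e = phiLetter d i (phi d η e) := rfl

lemma phiLetter_zero (d : Series) (e : Series) : phiLetter d 0 e = lconcat 0 e := if_pos rfl

lemma phiLetter_one (d : Series) (e : Series) :
    phiLetter d 1 e = lconcat 1 e + lconcat 0 (sh d e) := if_neg (by decide)

lemma phiLetter_apply_nil (d : Series) (i : Fin 2) (e : Series) : phiLetter d i e [] = 0 := by
  have hi : i = 0 ∨ i = 1 := by fin_cases i <;> simp
  rcases hi with rfl | rfl
  · rw [phiLetter_zero]; rfl
  · rw [phiLetter_one]; simp [lconcat_nil]

/-- Support of `φ_d(η')(1)`: length and degree bounds. -/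
lemma phi_one_supp : ∀ (η' : Word) (d : Series) (w : Word), phi d η' one w ≠ 0 →
    η'.length ≤ w.length ∧ degw η' ≤ degw w
  | [], d, w, _ => by simp [degw_nil]
  | i :: τ, d, w, h => by
    rw [phi_cons] at h
    have hi : i = 0 ∨ i = 1 := by fin_cases i <;> simp
    cases w with
    | nil => exact absurd (phiLetter_apply_nil d i (phi d τ one)) h
    | cons j v =>
      rcases hi with rfl | rfl
      · rw [phiLetter_zero, lconcat_cons] at h
        by_cases hj : j = 0
        · rw [if_pos hj] at h
          obtain ⟨h1, h2⟩ := phi_one_supp τ d v h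
          subst hj
          refine ⟨by simpa using Nat.succ_le_succ h1, ?_⟩
          rw [degw_cons, degw_cons]; simp; omega
        · rw [if_neg hj] at h; exact absurd rfl h
      · rw [phiLetter_one] at h
        have h' : (lconcat 1 (phi d τ one)) (j :: v) ≠ 0 ∨
            (lconcat 0 (sh d (phi d τ one))) (j :: v) ≠ 0 := by
          by_contra hc; push_neg at hc
          exact h (by simp only [Pi.add_apply, hc.1, hc.2, add_zero])
        rcases h' with h' | h'
        · rw [lconcat_cons] at h'
          by_cases hj : j = 1
          · rw [if_pos hj] at h'
            obtain ⟨h1, h2⟩ := phi_one_supp τ d v h'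
            subst hj
            refine ⟨by simpa using Nat.succ_le_succ h1, ?_⟩
            rw [degw_cons, degw_cons]; simp; omega
          · rw [if_neg hj] at h'; exact absurd rfl h'
        · rw [lconcat_cons] at h'
          by_cases hj : j = 0
          · rw [if_pos hj] at h'
            obtain ⟨v1, v2, _, hv2, hdeg, hlen⟩ := sh_supp v d (phi d τ one) h'
            obtain ⟨h1, h2⟩ := phi_one_supp τ d v2 hv2
            subst hj
            constructor
            · simp only [List.length_cons]; omega
            · rw [degw_cons, degw_cons]; simp; omega
          · rw [if_neg hj] at h'; exact absurd rfl h'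

/-- Triangularity: on words of degree at most `deg η'`, `φ_d(η')(1)` is the indicator of `η'`. -/
lemma phi_one_diag : ∀ (η' : Word) (d : Series) (w : Word), degw w ≤ degw η' →
    phi d η' one w = ind η' w
  | [], d, w, hw => by
    have : w.length = 0 := by have := length_le_degw w; rw [degw_nil] at hw; omega
    rw [List.length_eq_zero_iff] at this
    subst this
    rw [phi_nil, one_nil, ind_self]
  | i :: τ, d, w, hw => by
    rw [phi_cons]
    have hi : i = 0 ∨ i = 1 := by fin_cases i <;> simp
    cases w with
    | nil =>
      rw [phiLetter_apply_nil]
      exact (ind_ne (by simp)).symm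
    | cons j v =>
      have hj : j = 0 ∨ j = 1 := by fin_cases j <;> simp
      rcases hi with rfl | rfl
      · rw [phiLetter_zero, lconcat_cons]
        rcases hj with rfl | rfl
        · rw [if_pos rfl]
          rw [degw_cons, degw_cons] at hw
          rw [phi_one_diag τ d v (by simpa using hw)]
          simp [ind, List.cons_eq_cons]
        · rw [if_neg (by decide)]
          exact (ind_ne (by simp [List.cons_eq_cons])).symm
      · rw [phiLetter_one, Pi.add_apply, lconcat_cons, lconcat_cons]
        rcases hj with rfl | rfl
        · rw [if_neg (by decide), if_pos rfl, zero_add]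
          rw [degw_cons, degw_cons] at hw
          simp only [if_pos, if_neg] at hw ⊢
          have hv : degw v < degw τ := by
            have : (2:ℕ) + degw v ≤ 1 + degw τ := by simpa using hw
            omega
          have hz : sh d (phi d τ one) v = 0 := by
            by_contra hc
            obtain ⟨v1, v2, _, hv2, hdeg, _⟩ := sh_supp v d (phi d τ one) hc
            have h2 : degw v2 ≤ degw τ := by omega
            rw [phi_one_diag τ d v2 h2] at hv2
            have : v2 = τ := by
              by_contra hne; exact hv2 (ind_ne hne)
            subst this; omega
          rw [hz]
          exact (ind_ne (by simp [List.cons_eq_cons])).symm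
        · rw [if_pos rfl, if_neg (by decide), add_zero]
          rw [degw_cons, degw_cons] at hw
          have : degw v ≤ degw τ := by simp at hw; omega
          rw [phi_one_diag τ d v this]
          simp [ind, List.cons_eq_cons]

/-! ### mcomp as a finite sum, recursions -/

lemma mcomp_eq_sum (c d : Series) (w : Word) :
    mcomp c d w = ∑ η' ∈ WU w.length, c η' * phi d η' one w := by
  refine tsum_eq_sum ?_
  intro η' hη'
  rw [mem_WU] at hη'
  push_neg at hη'
  rcases eq_or_ne (phi d η' one w) 0 with h | h
  · rw [h, mul_zero]
  · exact absurd (phi_one_supp η' d w h).1 (by omega)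

lemma mcomp_eq_sum_of_le (c d : Series) (w : Word) (N : ℕ) (hN : w.length ≤ N) :
    mcomp c d w = ∑ η' ∈ WU N, c η' * phi d η' one w := by
  rw [mcomp_eq_sum]
  refine Finset.sum_subset (fun x hx => mem_WU.mpr (le_trans (mem_WU.mp hx) hN)) ?_
  intro x _ hx
  rw [mem_WU] at hx
  rcases eq_or_ne (phi d x one w) 0 with h | h
  · rw [h, mul_zero]
  · exact absurd (phi_one_supp x d w h).1 (by omega)

lemma mcomp_nil (c d : Series) : mcomp c d [] = c [] := by
  rw [mcomp_eq_sum]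
  simp only [List.length_nil]
  rw [show WU 0 = {([] : Word)} from rfl, Finset.sum_singleton, phi_nil, one_nil, mul_one]

lemma mcomp_cons1 (c d : Series) (w : Word) :
    mcomp c d (1 :: w) = mcomp (lshift 1 c) d w := by
  rw [mcomp_eq_sum, mcomp_eq_sum, List.length_cons, sum_WU_succ]
  rw [phi_nil, one_cons, mul_zero, zero_add]
  have h0 : ∀ τ : Word, c (0 :: τ) * phi d (0 :: τ) one (1 :: w) = 0 := by
    intro τ
    rw [phi_cons, phiLetter_zero, lconcat_cons, if_neg (by decide), mul_zero]
  have h1 : ∀ τ : Word, c (1 :: τ) * phi d (1 :: τ) one (1 :: w)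
      = lshift 1 c τ * phi d τ one w := by
    intro τ
    rw [phi_cons, phiLetter_one, Pi.add_apply, lconcat_cons, lconcat_cons,
      if_pos rfl, if_neg (by decide), add_zero]
    rfl
  rw [Finset.sum_congr rfl (fun τ _ => h0 τ), Finset.sum_congr rfl (fun τ _ => h1 τ)]
  simp

lemma mcomp_cons0 (c d : Series) (w : Word) :
    mcomp c d (0 :: w) = mcomp (lshift 0 c) d w + sh d (mcomp (lshift 1 c) d) w := by
  rw [mcomp_eq_sum c d, List.length_cons, sum_WU_succ]
  rw [phi_nil, one_cons, mul_zero, zero_add]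
  have h0 : ∀ τ : Word, c (0 :: τ) * phi d (0 :: τ) one (0 :: w)
      = lshift 0 c τ * phi d τ one w := by
    intro τ
    rw [phi_cons, phiLetter_zero, lconcat_cons, if_pos rfl]
    rfl
  have h1 : ∀ τ : Word, c (1 :: τ) * phi d (1 :: τ) one (0 :: w)
      = c (1 :: τ) * sh d (phi d τ one) w := by
    intro τ
    rw [phi_cons, phiLetter_one, Pi.add_apply, lconcat_cons, lconcat_cons,
      if_neg (by decide), if_pos rfl, zero_add]
  rw [Finset.sum_congr rfl (fun τ _ => h0 τ), Finset.sum_congr rfl (fun τ _ => h1 τ)]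
  congr 1
  · exact (mcomp_eq_sum _ _ _).symm
  · have : ∀ τ : Word, c (1 :: τ) * sh d (phi d τ one) w
        = sh d (c (1 :: τ) • phi d τ one) w := by
      intro τ; rw [sh_smul_right]
    rw [Finset.sum_congr rfl (fun τ _ => this τ), ← sh_sum_right]
    refine sh_congr w d d _ _ (fun v _ => rfl) ?_
    intro v hv
    rw [Finset.sum_apply]
    simp only [Pi.smul_apply, smul_eq_mul]
    exact (mcomp_eq_sum_of_le (lshift 1 c) d v w.length hv).symm

lemma mcomp_add_left (a b d : Series) (w : Word) :
    mcomp (a + b) d w = mcomp a d w + mcomp b d w := by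
  rw [mcomp_eq_sum, mcomp_eq_sum, mcomp_eq_sum, ← Finset.sum_add_distrib]
  exact Finset.sum_congr rfl (fun η' _ => by rw [Pi.add_apply]; ring)

lemma mcomp_sub_left (a b d : Series) (w : Word) :
    mcomp (a - b) d w = mcomp a d w - mcomp b d w := by
  rw [mcomp_eq_sum, mcomp_eq_sum, mcomp_eq_sum, ← Finset.sum_sub_distrib]
  exact Finset.sum_congr rfl (fun η' _ => by rw [Pi.sub_apply]; ring)
/-! ### mcomp is a shuffle homomorphism; injectivity -/

lemma lshift_sh (i : Fin 2) (a b : Series) :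
    lshift i (sh a b) = sh (lshift i a) b + sh a (lshift i b) := by
  funext v; exact sh_cons a b i v

lemma lshift1_mcomp (a d : Series) : lshift 1 (mcomp a d) = mcomp (lshift 1 a) d := by
  funext v; exact mcomp_cons1 a d v

lemma lshift0_mcomp (a d : Series) :
    lshift 0 (mcomp a d) = mcomp (lshift 0 a) d + sh d (mcomp (lshift 1 a) d) := by
  funext v; exact mcomp_cons0 a d v

lemma mcomp_sh_aux : ∀ (n : ℕ) (w : Word), w.length ≤ n → ∀ (a b d : Series),
    mcomp (sh a b) d w = sh (mcomp a d) (mcomp b d) w := by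
  intro n
  induction n with
  | zero =>
    intro w hw a b d
    have : w = [] := by rw [← List.length_eq_zero_iff]; omega
    subst this
    rw [mcomp_nil, sh_nil, sh_nil, mcomp_nil, mcomp_nil]
  | succ n ih =>
    intro w hw a b d
    cases w with
    | nil => rw [mcomp_nil, sh_nil, sh_nil, mcomp_nil, mcomp_nil]
    | cons i v =>
      have hv : v.length ≤ n := by simpa using hw
      have hi : i = 0 ∨ i = 1 := by fin_cases i <;> simp
      rcases hi with rfl | rfl
      · rw [mcomp_cons0, lshift_sh, lshift_sh, mcomp_add_left, ih v hv, ih v hv,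
          sh_cons, lshift0_mcomp, lshift0_mcomp, sh_add_left]
        have hinner : sh d (mcomp (sh (lshift 1 a) b + sh a (lshift 1 b)) d) v
            = sh d (sh (mcomp (lshift 1 a) d) (mcomp b d)) v
              + sh d (sh (mcomp a d) (mcomp (lshift 1 b) d)) v := by
          rw [← sh_add_right]
          refine sh_congr v d d _ _ (fun _ _ => rfl) ?_
          intro v' hv'
          rw [mcomp_add_left, ih v' (le_trans hv' hv), ih v' (le_trans hv' hv)]
          rfl
        rw [hinner]
        have h1 : sh (sh d (mcomp (lshift 1 a) d)) (mcomp b d) v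
            = sh d (sh (mcomp (lshift 1 a) d) (mcomp b d)) v := sh_assoc v _ _ _
        have h2 : sh (mcomp a d) (sh d (mcomp (lshift 1 b) d)) v
            = sh d (sh (mcomp a d) (mcomp (lshift 1 b) d)) v := by
          rw [sh_comm v, sh_assoc v]
          exact sh_congr v d d _ _ (fun _ _ => rfl)
            (fun v' _ => sh_comm v' (mcomp (lshift 1 b) d) (mcomp a d))
        rw [sh_add_right, h1, h2]
        ring
      · rw [mcomp_cons1, lshift_sh, mcomp_add_left, ih v hv, ih v hv,
          sh_cons, lshift1_mcomp, lshift1_mcomp]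

lemma mcomp_sh (a b d : Series) :
    mcomp (sh a b) d = sh (mcomp a d) (mcomp b d) := by
  funext w; exact mcomp_sh_aux w.length w le_rfl a b d

/-- Injectivity (in the first argument) of the modified composition. -/
lemma mcomp_eq_zero_inj (d z : Series) (hz : ∀ w, mcomp z d w = 0) : ∀ w, z w = 0 := by
  suffices H : ∀ m (w : Word), degw w = m → z w = 0 by
    intro w; exact H (degw w) w rfl
  intro m
  induction m using Nat.strong_induction_on with
  | _ m ihm =>
    intro w hw
    have h0 := hz w
    rw [mcomp_eq_sum] at h0
    rw [Finset.sum_eq_single w ?h1 ?h2] at h0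
    · rw [phi_one_diag w d w le_rfl, ind_self, mul_one] at h0
      exact h0
    case h1 =>
      intro η' _ hne
      rcases lt_or_ge (degw η') (degw w) with hlt | hle
      · rw [ihm (degw η') (by omega) η' rfl, zero_mul]
      · rw [phi_one_diag η' d w (by omega), ind_ne (Ne.symm hne), mul_zero]
    case h2 =>
      intro hnotmem
      exact absurd (mem_WU.mpr le_rfl) hnotmem

/-! ### The Ferfera series family -/

def fer (a : ℕ) : Series := fun w =>
  if w = List.replicate w.length 1 then ((w.length + a).factorial : ℝ) else 0

lemma ferfera_eq_fer : ferfera = fer 0 := by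
  funext w; simp [ferfera, fer]

lemma fer_nil (a : ℕ) : fer a [] = (a.factorial : ℝ) := by simp [fer]

lemma lshift1_fer (a : ℕ) : lshift 1 (fer a) = fer (a + 1) := by
  funext w
  show fer a (1 :: w) = fer (a+1) w
  simp only [fer, List.length_cons, List.replicate_succ, List.cons_eq_cons, true_and]
  by_cases h : w = List.replicate w.length 1
  · rw [if_pos h, if_pos h, show w.length + 1 + a = w.length + (a+1) from by omega]
  · rw [if_neg h, if_neg h]

lemma lshift0_fer (a : ℕ) : lshift 0 (fer a) = 0 := by
  funext w
  show fer a (0 :: w) = 0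
  simp only [fer, List.length_cons, List.replicate_succ]
  rw [if_neg]
  intro h
  exact absurd (List.head_eq_of_cons_eq h) (by decide)

lemma sh_fer : ∀ (w : Word) (a b : ℕ),
    ((a + b + 1).factorial : ℝ) * sh (fer a) (fer b) w
      = (a.factorial : ℝ) * (b.factorial : ℝ) * fer (a + b + 1) w
  | [], a, b => by
    rw [sh_nil, fer_nil, fer_nil, fer_nil]
    push_cast
    ring
  | i :: w, a, b => by
    have hi : i = 0 ∨ i = 1 := by fin_cases i <;> simp
    rcases hi with rfl | rfl
    · rw [sh_cons, lshift0_fer, lshift0_fer, sh_zero_left, sh_zero_right, add_zero,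
        show fer (a+b+1) (0 :: w) = lshift 0 (fer (a+b+1)) w from rfl, lshift0_fer]
      simp
    · rw [sh_cons, lshift1_fer, lshift1_fer,
        show fer (a+b+1) (1 :: w) = lshift 1 (fer (a+b+1)) w from rfl, lshift1_fer]
      have h1 := sh_fer w (a+1) b
      have h2 := sh_fer w a (b+1)
      have hc : ((a+b+2).factorial : ℝ) ≠ 0 := Nat.cast_ne_zero.mpr (Nat.factorial_ne_zero _)
      refine mul_left_cancel₀ hc ?_
      have e1 : (a+1) + b + 1 = a + b + 2 := by ring
      have e2 : a + (b+1) + 1 = a + b + 2 := by ring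
      rw [e1] at h1; rw [e2] at h2
      have hfac : ((a+b+2).factorial : ℝ) = ((a+b+2) : ℝ) * ((a+b+1).factorial : ℝ) := by
        rw [show a+b+2 = (a+b+1)+1 from rfl, Nat.factorial_succ]
        push_cast; ring
      calc ((a+b+2).factorial : ℝ) * (((a+b+1).factorial : ℝ)
              * (sh (fer (a+1)) (fer b) w + sh (fer a) (fer (b+1)) w))
          = ((a+b+1).factorial : ℝ) * (((a+b+2).factorial : ℝ) * sh (fer (a+1)) (fer b) w
              + ((a+b+2).factorial : ℝ) * sh (fer a) (fer (b+1)) w) := by ring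
        _ = ((a+b+1).factorial : ℝ) * (((a+1).factorial : ℝ) * (b.factorial : ℝ) * fer (a+b+2) w
              + (a.factorial : ℝ) * ((b+1).factorial : ℝ) * fer (a+b+2) w) := by rw [h1, h2]
        _ = ((a+b+1).factorial : ℝ) * ((a.factorial : ℝ) * (b.factorial : ℝ)
              * (((a+1) : ℝ) + ((b+1) : ℝ)) * fer (a+b+2) w) := by
            rw [Nat.factorial_succ (a), Nat.factorial_succ (b)]
            push_cast; ring
        _ = ((a+b+2).factorial : ℝ) * ((a.factorial : ℝ) * (b.factorial : ℝ) * fer (a+b+2) w) := by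
            rw [hfac]; push_cast; ring

lemma sh_fer00 : sh (fer 0) (fer 0) = fer 1 := by
  funext w
  have := sh_fer w 0 0
  simpa using this

/-! ### Consequences of the group-inverse equation -/

section EIdent

variable {e : Series} (hkey : mcomp e (-ferfera) = ferfera)

include hkey

lemma e_nil_eq_one : e [] = 1 := by
  have h := congrFun hkey []
  rw [mcomp_nil] at h
  rw [h, ferfera_eq_fer, fer_nil]
  simp

lemma e_lshift1 : lshift 1 e = sh e e := by
  have hz : ∀ w, mcomp (lshift 1 e - sh e e) (-ferfera) w = 0 := by
    intro w
    rw [mcomp_sub_left]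
    have h1 : mcomp (lshift 1 e) (-ferfera) w = fer 1 w := by
      rw [← lshift1_mcomp, hkey]
      show ferfera (1 :: w) = fer 1 w
      rw [ferfera_eq_fer, show fer 0 (1 :: w) = lshift 1 (fer 0) w from rfl, lshift1_fer]
    have h2 : mcomp (sh e e) (-ferfera) w = fer 1 w := by
      rw [mcomp_sh, hkey, ferfera_eq_fer, sh_fer00]
    rw [h1, h2, sub_self]
  have := mcomp_eq_zero_inj (-ferfera) _ hz
  funext w
  have h := this w
  rw [Pi.sub_apply] at h
  linarith

lemma e_lshift0 : lshift 0 e = sh (sh e e) e := by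
  have key1 : mcomp (lshift 1 e) (-ferfera) = fer 1 := by
    rw [← lshift1_mcomp, hkey]
    funext w
    show ferfera (1 :: w) = fer 1 w
    rw [ferfera_eq_fer, show fer 0 (1 :: w) = lshift 1 (fer 0) w from rfl, lshift1_fer]
  have hz : ∀ w, mcomp (lshift 0 e - sh (sh e e) e) (-ferfera) w = 0 := by
    intro w
    rw [mcomp_sub_left]
    have h1 : mcomp (lshift 0 e) (-ferfera) w = sh (fer 0) (fer 1) w := by
      have h0 := congrFun (lshift0_mcomp e (-ferfera)) w
      rw [hkey, key1] at h0
      have hlf : lshift 0 ferfera = 0 := by rw [ferfera_eq_fer]; exact lshift0_fer 0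
      rw [hlf] at h0
      have hneg : sh (-ferfera) (fer 1) w = -(sh ferfera (fer 1) w) := sh_neg_left w _ _
      rw [Pi.add_apply, Pi.zero_apply] at h0
      have : mcomp (lshift 0 e) (-ferfera) w = - sh (-ferfera) (fer 1) w := by linarith [h0.symm]
      rw [this, hneg, neg_neg, ferfera_eq_fer]
    have h2 : mcomp (sh (sh e e) e) (-ferfera) w = sh (fer 0) (fer 1) w := by
      rw [mcomp_sh, mcomp_sh, hkey, ferfera_eq_fer, sh_fer00]
      exact sh_comm w _ _
    rw [h1, h2, sub_self]
  have := mcomp_eq_zero_inj (-ferfera) _ hz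
  funext w
  have h := this w
  rw [Pi.sub_apply] at h
  linarith

end EIdent
/-! ### Generic (H-valued) series and the explicit coproduct -/

def lshiftG (i : Fin 2) (c : Word → H) : Word → H := fun w => c (i :: w)

def lconcatG (i : Fin 2) (c : Word → H) : Word → H := fun w =>
  match w with
  | [] => 0
  | j :: v => if j = i then c v else 0

def shG : (Word → H) → (Word → H) → Word → H
  | c, d, [] => c [] * d []
  | c, d, i :: w => shG (lshiftG i c) d w + shG c (lshiftG i d) w

def phiLetterG (d : Word → H) (i : Fin 2) (e : Word → H) : Word → H :=
  if i = 0 then lconcatG 0 e else lconcatG 1 e + lconcatG 0 (shG d e)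

def phiG (d : Word → H) : Word → (Word → H) → (Word → H)
  | [], e => e
  | i :: η, e => phiLetterG d i (phiG d η e)

def oneG : Word → H := fun w => if w = [] then 1 else 0

def PW (η' η : Word) : H := phiG aw η' oneG η

lemma evalS_shG (d : Series) : ∀ (w : Word) (c e : Word → H),
    evalS d (shG c e w) = sh (fun v => evalS d (c v)) (fun v => evalS d (e v)) w
  | [], c, e => by
    show evalS d (c [] * e []) = _
    rw [map_mul, sh_nil]
  | i :: w, c, e => by
    show evalS d (shG (lshiftG i c) e w + shG c (lshiftG i e) w) = _
    rw [map_add, evalS_shG d w, evalS_shG d w, sh_cons]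
    rfl

lemma evalS_lconcatG (d : Series) (i : Fin 2) (c : Word → H) (w : Word) :
    evalS d (lconcatG i c w) = lconcat i (fun v => evalS d (c v)) w := by
  cases w with
  | nil => show evalS d 0 = (0:ℝ); exact map_zero _
  | cons j v =>
    show evalS d (if j = i then c v else 0) = if j = i then evalS d (c v) else 0
    by_cases h : j = i <;> simp [h]

lemma evalS_phiG (d : Series) : ∀ (η : Word) (c e : Word → H) (w : Word),
    evalS d (phiG c η e w) = phi (fun v => evalS d (c v)) η (fun v => evalS d (e v)) w
  | [], c, e, w => rfl
  | i :: η, c, e, w => by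
    have hIH : (fun v => evalS d (phiG c η e v))
        = phi (fun v => evalS d (c v)) η (fun v => evalS d (e v)) :=
      funext (fun v => evalS_phiG d η c e v)
    have hi : i = 0 ∨ i = 1 := by fin_cases i <;> simp
    rw [phi_cons]
    rcases hi with rfl | rfl
    · show evalS d (phiLetterG c 0 (phiG c η e) w) = _
      rw [phiLetterG, if_pos rfl, phiLetter_zero, evalS_lconcatG, hIH]
    · show evalS d (phiLetterG c 1 (phiG c η e) w) = _
      rw [phiLetterG, if_neg (by decide), phiLetter_one]
      rw [Pi.add_apply, map_add, evalS_lconcatG, evalS_lconcatG, Pi.add_apply]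
      congr 1
      · rw [hIH]
      · have : (fun v => evalS d (shG c (phiG c η e) v))
            = sh (fun v => evalS d (c v)) (fun v => evalS d (phiG c η e v)) :=
          funext (fun v => evalS_shG d v c (phiG c η e))
        show lconcat 0 (fun v => evalS d (shG c (phiG c η e) v)) w = _
        rw [this, hIH]

lemma evalS_aw (d : Series) (v : Word) : evalS d (aw v) = d v := by
  simp [evalS, aw]

lemma evalS_oneG (d : Series) (w : Word) : evalS d (oneG w) = one w := by
  rcases w with _ | ⟨i, v⟩
  · show evalS d 1 = one []
    rw [map_one, one_nil]
  · show evalS d 0 = one (i :: v)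
    rw [map_zero, one_cons]

lemma evalS_PW (d : Series) (η' η : Word) : evalS d (PW η' η) = phi d η' one η := by
  rw [PW, evalS_phiG]
  congr 1
  · funext v; exact evalS_aw d v
  · funext v; exact evalS_oneG d v

/-! ### Separation of points on `H ⊗ H` -/

lemma evalS_eq_eval (c : Series) (p : H) : evalS c p = MvPolynomial.eval c p := rfl

lemma evalPair_tmul (c d : Series) (p q : H) :
    evalPair c d (p ⊗ₜ[ℝ] q) = evalS c p * evalS d q := by
  simp [evalPair]

lemma evalPair_eq (c d : Series) (x : H ⊗[ℝ] H) :
    evalPair c d x = MvPolynomial.eval d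
      (MvPolynomial.map (evalS c).toRingHom ((MvPolynomial.algebraTensorAlgEquiv ℝ H) x)) := by
  induction x using TensorProduct.induction_on with
  | zero => simp
  | tmul p q =>
    rw [evalPair_tmul, MvPolynomial.algebraTensorAlgEquiv_tmul,
      MvPolynomial.smul_eq_C_mul, map_mul, MvPolynomial.map_C, map_mul, MvPolynomial.eval_C,
      MvPolynomial.map_map]
    have hmap : MvPolynomial.map ((evalS c).toRingHom.comp (algebraMap ℝ H)) q = q := by
      have h1 : (evalS c).toRingHom.comp (algebraMap ℝ H) = algebraMap ℝ ℝ :=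
        AlgHom.comp_algebraMap (evalS c)
      rw [h1, show (algebraMap ℝ ℝ) = RingHom.id ℝ from Algebra.algebraMap_self,
        MvPolynomial.map_id]
    rw [hmap, evalS_eq_eval]
    rfl
  | add x y hx hy =>
    rw [map_add, map_add, map_add, map_add, hx, hy]

lemma tensor_sep (x : H ⊗[ℝ] H) (h : ∀ c d : Series, evalPair c d x = 0) : x = 0 := by
  have h1 : ∀ c : Series,
      MvPolynomial.map (evalS c).toRingHom ((MvPolynomial.algebraTensorAlgEquiv ℝ H) x) = 0 := by
    intro c
    apply MvPolynomial.funext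
    intro d
    rw [← evalPair_eq c d x, h c d, map_zero]
  have h2 : (MvPolynomial.algebraTensorAlgEquiv ℝ H) x = 0 := by
    apply MvPolynomial.ext
    intro m
    have h3 : ∀ c : Series,
        MvPolynomial.eval c (MvPolynomial.coeff m ((MvPolynomial.algebraTensorAlgEquiv ℝ H) x))
          = 0 := by
      intro c
      have := congrArg (MvPolynomial.coeff m) (h1 c)
      rw [MvPolynomial.coeff_map, MvPolynomial.coeff_zero] at this
      rw [← evalS_eq_eval]
      exact this
    have := MvPolynomial.funext (p := MvPolynomial.coeff m
      ((MvPolynomial.algebraTensorAlgEquiv ℝ H) x)) (q := 0) (fun c => by rw [h3 c, map_zero])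
    rw [this, MvPolynomial.coeff_zero]
  have h4 : (MvPolynomial.algebraTensorAlgEquiv ℝ H) x
      = (MvPolynomial.algebraTensorAlgEquiv ℝ H) 0 := by
    rw [h2, map_zero]
  exact (MvPolynomial.algebraTensorAlgEquiv ℝ H).injective h4

/-! ### Identification of the coproduct on the generators -/

def DeltaExpl (η : Word) : H ⊗[ℝ] H :=
  (∑ η' ∈ WU η.length, aw η' ⊗ₜ[ℝ] PW η' η) + 1 ⊗ₜ[ℝ] aw η

lemma evalPair_DeltaExpl (c d : Series) (η : Word) :
    evalPair c d (DeltaExpl η) = mcomp c d η + d η := by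
  rw [DeltaExpl, map_add, map_sum]
  congr 1
  · rw [mcomp_eq_sum]
    refine Finset.sum_congr rfl ?_
    intro η' _
    rw [evalPair_tmul, evalS_aw, evalS_PW]
  · rw [evalPair_tmul, map_one, one_mul, evalS_aw]

lemma Delta_eq_expl (Δ : H →ₐ[ℝ] (H ⊗[ℝ] H)) (hΔ : IsFBCoproduct Δ) (η : Word) :
    Δ (aw η) = DeltaExpl η := by
  have h : ∀ c d : Series, evalPair c d (Δ (aw η) - DeltaExpl η) = 0 := by
    intro c d
    rw [map_sub, hΔ η c d, evalPair_DeltaExpl, sub_self]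
  have := tensor_sep _ h
  rwa [sub_eq_zero] at this

/-! ### The antipode recursion -/

lemma antipode_one (Δ : H →ₐ[ℝ] (H ⊗[ℝ] H)) (S : H →ₗ[ℝ] H) (hS : IsAntipode Δ S) :
    S 1 = 1 := by
  have h := hS.1 1
  rw [map_one Δ, Algebra.TensorProduct.one_def, TensorProduct.map_tmul,
    LinearMap.mul'_apply, LinearMap.id_coe, id_eq, mul_one] at h
  rw [map_one counit, one_smul] at h
  exact h

theorem key_recursion (Δ : H →ₐ[ℝ] (H ⊗[ℝ] H)) (hΔ : IsFBCoproduct Δ)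
    (S : H →ₗ[ℝ] H) (hS : IsAntipode Δ S) :
    mcomp (fun v => evalS (-ferfera) (S (aw v))) (-ferfera) = ferfera := by
  funext η
  have h := hS.1 (aw η)
  rw [Delta_eq_expl Δ hΔ η, DeltaExpl, map_add, map_sum, map_add, map_sum] at h
  have hterm : ∀ η' : Word,
      LinearMap.mul' ℝ H (TensorProduct.map S LinearMap.id (aw η' ⊗ₜ[ℝ] PW η' η))
        = S (aw η') * PW η' η := by
    intro η'
    rw [TensorProduct.map_tmul, LinearMap.mul'_apply, LinearMap.id_coe, id_eq]
  have hterm2 : LinearMap.mul' ℝ H (TensorProduct.map S LinearMap.id (1 ⊗ₜ[ℝ] aw η))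
      = aw η := by
    rw [TensorProduct.map_tmul, LinearMap.mul'_apply, LinearMap.id_coe, id_eq,
      antipode_one Δ S hS, one_mul]
  rw [Finset.sum_congr rfl (fun η' _ => hterm η'), hterm2] at h
  have hcounit : counit (aw η) = 0 := by
    rw [counit, evalS_aw]
    rfl
  rw [hcounit, zero_smul] at h
  have h2 := congrArg (evalS (-ferfera)) h
  rw [map_add, map_sum, map_zero, evalS_aw] at h2
  have h3 : ∀ η' : Word, evalS (-ferfera) (S (aw η') * PW η' η)
      = evalS (-ferfera) (S (aw η')) * phi (-ferfera) η' one η := by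
    intro η'
    rw [map_mul, evalS_PW]
  rw [Finset.sum_congr rfl (fun η' _ => h3 η')] at h2
  have h4 : mcomp (fun v => evalS (-ferfera) (S (aw v))) (-ferfera) η + (-ferfera) η = 0 := by
    rw [mcomp_eq_sum]
    exact h2
  have : (-ferfera) η = -(ferfera η) := rfl
  rw [this] at h4
  linarith
/-! ### Analysis of iterated integrals -/

/-- Pointwise derivative of `E u η`. -/
def ED (u : Fin 2 → ℝ → ℝ) : Word → ℝ → ℝ
  | [], _ => 0
  | i :: η, t => u i t * E u η t

lemma E_nil (u : Fin 2 → ℝ → ℝ) (t : ℝ) : E u [] t = 1 := rfl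

lemma E_cons (u : Fin 2 → ℝ → ℝ) (i : Fin 2) (η : Word) (t : ℝ) :
    E u (i :: η) t = ∫ s in (0:ℝ)..t, u i s * E u η s := rfl

lemma E_zero_of_ne_nil (u : Fin 2 → ℝ → ℝ) {η : Word} (h : η ≠ []) : E u η 0 = 0 := by
  cases η with
  | nil => exact absurd rfl h
  | cons i τ => rw [E_cons, intervalIntegral.integral_same]

lemma lshift_ind_nil (k : Fin 2) : lshift k (ind []) = 0 := by
  funext w; simp [lshift, ind]

lemma lshift_ind_cons_self (i : Fin 2) (ξ : Word) : lshift i (ind (i :: ξ)) = ind ξ := by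
  funext w; simp [lshift, ind, List.cons_eq_cons]

lemma lshift_ind_cons_ne {k i : Fin 2} (h : k ≠ i) (ξ : Word) :
    lshift k (ind (i :: ξ)) = 0 := by
  funext w; simp [lshift, ind, List.cons_eq_cons, h]

section ContinuousInputs

variable {u : Fin 2 → ℝ → ℝ} (hu : ∀ i, Continuous (u i))

include hu

lemma E_continuous : ∀ η : Word, Continuous (E u η)
  | [] => continuous_const
  | i :: η => by
    have hc : Continuous fun s => u i s * E u η s := (hu i).mul (E_continuous η)
    rw [continuous_iff_continuousAt]
    intro t
    exact (intervalIntegral.integral_hasDerivAt_right (hc.intervalIntegrable 0 t)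
      hc.stronglyMeasurable.stronglyMeasurableAtFilter hc.continuousAt).continuousAt

lemma E_hasDerivAt : ∀ (η : Word) (t : ℝ), HasDerivAt (E u η) (ED u η t) t
  | [], t => hasDerivAt_const t 1
  | i :: η, t => by
    have hc : Continuous fun s => u i s * E u η s := (hu i).mul (E_continuous hu η)
    exact intervalIntegral.integral_hasDerivAt_right (hc.intervalIntegrable 0 t)
      hc.stronglyMeasurable.stronglyMeasurableAtFilter hc.continuousAt

/-- The shuffle-product identity for iterated integrals. -/
lemma E_shuffle : ∀ (n : ℕ) (ξ ν : Word), ξ.length + ν.length = n → ∀ t : ℝ,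
    E u ξ t * E u ν t = ∑ η ∈ WU n, sh (ind ξ) (ind ν) η * E u η t := by
  intro n
  induction n with
  | zero =>
    intro ξ ν h t
    have hξ : ξ = [] := by rw [← List.length_eq_zero_iff]; omega
    have hν : ν = [] := by rw [← List.length_eq_zero_iff]; omega
    subst hξ; subst hν
    rw [show WU 0 = {([] : Word)} from rfl, Finset.sum_singleton, sh_nil]
    simp [E_nil, ind_self]
  | succ n ih =>
    intro ξ ν h t
    -- the auxiliary identity for the derivative of the sum side in one input slot
    have claimA : ∀ (ξ ν : Word), ξ.length + ν.length = n + 1 → ∀ s : ℝ,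
        u 0 s * (∑ τ ∈ WU n, sh (lshift 0 (ind ξ)) (ind ν) τ * E u τ s)
          + u 1 s * (∑ τ ∈ WU n, sh (lshift 1 (ind ξ)) (ind ν) τ * E u τ s)
          = ED u ξ s * E u ν s := by
      intro ξ ν h s
      cases ξ with
      | nil =>
        rw [lshift_ind_nil, lshift_ind_nil]
        have hz : ∀ τ : Word, sh 0 (ind ν) τ * E u τ s = 0 := by
          intro τ; rw [sh_zero_left, zero_mul]
        rw [Finset.sum_congr rfl (fun τ _ => hz τ), Finset.sum_const_zero]
        show u 0 s * 0 + u 1 s * 0 = 0 * E u ν s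
        ring
      | cons i ξ' =>
        have hlen : ξ'.length + ν.length = n := by
          simp only [List.length_cons] at h; omega
        have hIH := (ih ξ' ν hlen s).symm
        have hi : i = 0 ∨ i = 1 := by fin_cases i <;> simp
        rcases hi with rfl | rfl
        · rw [lshift_ind_cons_self, lshift_ind_cons_ne (by decide) ξ']
          have hz : ∀ τ : Word, sh 0 (ind ν) τ * E u τ s = 0 := by
            intro τ; rw [sh_zero_left, zero_mul]
          rw [Finset.sum_congr rfl (fun τ _ => hz τ), Finset.sum_const_zero, hIH]
          show u 0 s * (E u ξ' s * E u ν s) + u 1 s * 0 = (u 0 s * E u ξ' s) * E u ν s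
          ring
        · rw [lshift_ind_cons_self, lshift_ind_cons_ne (by decide) ξ']
          have hz : ∀ τ : Word, sh 0 (ind ν) τ * E u τ s = 0 := by
            intro τ; rw [sh_zero_left, zero_mul]
          rw [Finset.sum_congr rfl (fun τ _ => hz τ), Finset.sum_const_zero, hIH]
          show u 0 s * 0 + u 1 s * (E u ξ' s * E u ν s) = (u 1 s * E u ξ' s) * E u ν s
          ring
    have claimB : ∀ s : ℝ,
        u 0 s * (∑ τ ∈ WU n, sh (ind ξ) (lshift 0 (ind ν)) τ * E u τ s)
          + u 1 s * (∑ τ ∈ WU n, sh (ind ξ) (lshift 1 (ind ν)) τ * E u τ s)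
          = E u ξ s * ED u ν s := by
      intro s
      have h2 := claimA ν ξ (by omega) s
      have e0 : (∑ τ ∈ WU n, sh (ind ξ) (lshift 0 (ind ν)) τ * E u τ s)
          = ∑ τ ∈ WU n, sh (lshift 0 (ind ν)) (ind ξ) τ * E u τ s :=
        Finset.sum_congr rfl (fun τ _ => by rw [sh_comm τ])
      have e1 : (∑ τ ∈ WU n, sh (ind ξ) (lshift 1 (ind ν)) τ * E u τ s)
          = ∑ τ ∈ WU n, sh (lshift 1 (ind ν)) (ind ξ) τ * E u τ s :=
        Finset.sum_congr rfl (fun τ _ => by rw [sh_comm τ])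
      rw [e0, e1, h2]
      ring
    -- both sides have the same derivative everywhere
    have hDF : ∀ s : ℝ, HasDerivAt (fun r => E u ξ r * E u ν r)
        (ED u ξ s * E u ν s + E u ξ s * ED u ν s) s := by
      intro s
      exact (E_hasDerivAt hu ξ s).mul (E_hasDerivAt hu ν s)
    have hDG : ∀ s : ℝ, HasDerivAt (fun r => ∑ η ∈ WU (n+1), sh (ind ξ) (ind ν) η * E u η r)
        (ED u ξ s * E u ν s + E u ξ s * ED u ν s) s := by
      intro s
      have hsum : HasDerivAt (fun r => ∑ η ∈ WU (n+1), sh (ind ξ) (ind ν) η * E u η r)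
          (∑ η ∈ WU (n+1), sh (ind ξ) (ind ν) η * ED u η s) s := by
        apply HasDerivAt.fun_sum
        intro η _
        exact (E_hasDerivAt hu η s).const_mul _
      convert hsum using 1
      have h0 : sh (ind ξ) (ind ν) [] * ED u [] s = 0 := by
        show _ * 0 = 0; ring
      have hconsk : ∀ (k : Fin 2) (τ : Word), sh (ind ξ) (ind ν) (k :: τ) * ED u (k :: τ) s
          = sh (lshift k (ind ξ)) (ind ν) τ * E u τ s * u k s
            + sh (ind ξ) (lshift k (ind ν)) τ * E u τ s * u k s := by
        intro k τ
        have hED : ED u (k :: τ) s = u k s * E u τ s := rfl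
        rw [sh_cons, hED]
        ring
      rw [sum_WU_succ, h0, zero_add,
        Finset.sum_congr rfl (fun τ _ => hconsk 0 τ),
        Finset.sum_congr rfl (fun τ _ => hconsk 1 τ),
        Finset.sum_add_distrib, Finset.sum_add_distrib,
        ← Finset.sum_mul, ← Finset.sum_mul, ← Finset.sum_mul, ← Finset.sum_mul,
        ← claimA ξ ν h s, ← claimB s]
      ring
    -- equal at 0
    have hF0 : E u ξ 0 * E u ν 0 = ∑ η ∈ WU (n+1), sh (ind ξ) (ind ν) η * E u η 0 := by
      have hrhs : ∑ η ∈ WU (n+1), sh (ind ξ) (ind ν) η * E u η 0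
          = sh (ind ξ) (ind ν) [] := by
        rw [Finset.sum_eq_single ([] : Word)]
        · rw [E_nil, mul_one]
        · intro η _ hne
          rw [E_zero_of_ne_nil u hne, mul_zero]
        · intro hnm
          exact absurd (mem_WU.mpr (by simp)) hnm
      rw [hrhs, sh_nil]
      rcases List.eq_nil_or_concat ξ with hξ | hξc
      · subst hξ
        have hν : ν ≠ [] := by
          intro hc; subst hc; simp at h
        rw [E_zero_of_ne_nil u hν, E_nil, ind_ne (fun hc : ([] : Word) = ν => hν hc.symm)]
        ring
      · have hξ : ξ ≠ [] := by
          obtain ⟨l, a, rfl⟩ := hξc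
          simp
        rw [E_zero_of_ne_nil u hξ, ind_ne (fun hc : ([] : Word) = ξ => hξ hc.symm)]
        ring
    -- conclude equality everywhere
    have hdiff : ∀ s : ℝ, HasDerivAt
        (fun r => E u ξ r * E u ν r - ∑ η ∈ WU (n+1), sh (ind ξ) (ind ν) η * E u η r) 0 s := by
      intro s
      have := (hDF s).fun_sub (hDG s)
      simpa using this
    have hconst := is_const_of_deriv_eq_zero (f := fun r =>
        E u ξ r * E u ν r - ∑ η ∈ WU (n+1), sh (ind ξ) (ind ν) η * E u η r)
      (fun s => (hdiff s).differentiableAt) (fun s => (hdiff s).deriv)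
    have := hconst t 0
    have h0 : E u ξ 0 * E u ν 0 - ∑ η ∈ WU (n+1), sh (ind ξ) (ind ν) η * E u η 0 = 0 := by
      rw [hF0]; ring
    rw [h0] at this
    linarith [this]

end ContinuousInputs

/-- Congruence of iterated integrals for inputs agreeing on `[0, ω]`. -/
lemma E_congr {u v : Fin 2 → ℝ → ℝ} {ω : ℝ}
    (hw : ∀ (i : Fin 2), ∀ s ∈ Set.Icc (0:ℝ) ω, u i s = v i s) :
    ∀ (η : Word), ∀ t ∈ Set.Icc (0:ℝ) ω, E u η t = E v η t := by
  intro η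
  induction η with
  | nil => intro t _; rfl
  | cons i τ ih =>
    intro t ht
    rw [E_cons, E_cons]
    apply intervalIntegral.integral_congr
    intro s hs
    rw [Set.uIcc_of_le ht.1] at hs
    have hs' : s ∈ Set.Icc (0:ℝ) ω := ⟨hs.1, hs.2.trans ht.2⟩
    show u i s * E u τ s = v i s * E v τ s
    rw [hw i s hs', ih s hs']
/-! ### Expansion in the indicator basis; products of sums of iterated integrals -/

lemma series_eq_sum_ind (x : Series) (N : ℕ) (hx : ∀ w : Word, x w ≠ 0 → w.length ≤ N) :
    x = ∑ ξ ∈ WU N, x ξ • ind ξ := by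
  funext v
  rw [Finset.sum_apply]
  by_cases hv : v.length ≤ N
  · rw [Finset.sum_eq_single v]
    · rw [Pi.smul_apply, ind_self, smul_eq_mul, mul_one]
    · intro ξ _ hne
      rw [Pi.smul_apply, ind_ne (Ne.symm hne), smul_zero]
    · intro hnm; exact absurd (mem_WU.mpr hv) hnm
  · have hxv : x v = 0 := by
      by_contra hc; exact hv (hx v hc)
    rw [hxv]
    symm
    apply Finset.sum_eq_zero
    intro ξ hξ
    have hne : v ≠ ξ := by
      intro hc; subst hc; exact hv (mem_WU.mp hξ)
    rw [Pi.smul_apply, ind_ne hne, smul_zero]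

lemma sh_expand (x y : Series) (N M : ℕ) (hx : ∀ w : Word, x w ≠ 0 → w.length ≤ N)
    (hy : ∀ w : Word, y w ≠ 0 → w.length ≤ M) (η : Word) :
    sh x y η = ∑ ξ ∈ WU N, ∑ ν ∈ WU M, x ξ * y ν * sh (ind ξ) (ind ν) η := by
  conv_lhs => rw [series_eq_sum_ind x N hx, series_eq_sum_ind y M hy]
  rw [sh_sum_left]
  refine Finset.sum_congr rfl ?_
  intro ξ _
  rw [sh_smul_left, sh_sum_right, Finset.mul_sum]
  refine Finset.sum_congr rfl ?_
  intro ν _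
  rw [sh_smul_right]
  ring

lemma sh_ind_supp {ξ ν w : Word} (h : sh (ind ξ) (ind ν) w ≠ 0) :
    w.length = ξ.length + ν.length := by
  obtain ⟨v1, v2, h1, h2, _, hlen⟩ := sh_supp w _ _ h
  have e1 : v1 = ξ := by by_contra hc; exact h1 (ind_ne hc)
  have e2 : v2 = ν := by by_contra hc; exact h2 (ind_ne hc)
  subst e1; subst e2; omega

lemma FS_mul {u : Fin 2 → ℝ → ℝ} (hu : ∀ i, Continuous (u i))
    (x y : Series) (N M : ℕ) (hx : ∀ w : Word, x w ≠ 0 → w.length ≤ N)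
    (hy : ∀ w : Word, y w ≠ 0 → w.length ≤ M) (t : ℝ) :
    (∑ η ∈ WU N, x η * E u η t) * (∑ η ∈ WU M, y η * E u η t)
      = ∑ η ∈ WU (N + M), sh x y η * E u η t := by
  rw [Finset.sum_mul_sum]
  have hterm : ∀ ξ ∈ WU N, ∀ ν ∈ WU M,
      (x ξ * E u ξ t) * (y ν * E u ν t)
        = ∑ η ∈ WU (N + M), x ξ * y ν * sh (ind ξ) (ind ν) η * E u η t := by
    intro ξ hξ ν hν
    have hE := E_shuffle hu (ξ.length + ν.length) ξ ν rfl t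
    have hsub : (∑ η ∈ WU (ξ.length + ν.length), sh (ind ξ) (ind ν) η * E u η t)
        = ∑ η ∈ WU (N + M), sh (ind ξ) (ind ν) η * E u η t := by
      apply Finset.sum_subset
      · intro w hw
        exact mem_WU.mpr (le_trans (mem_WU.mp hw)
          (add_le_add (mem_WU.mp hξ) (mem_WU.mp hν)))
      · intro w hw1 hw2
        rcases eq_or_ne (sh (ind ξ) (ind ν) w) 0 with h | h
        · rw [h, zero_mul]
        · exact absurd (mem_WU.mpr (le_of_eq (sh_ind_supp h))) hw2
    calc (x ξ * E u ξ t) * (y ν * E u ν t)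
        = x ξ * y ν * (E u ξ t * E u ν t) := by ring
      _ = x ξ * y ν * ∑ η ∈ WU (N + M), sh (ind ξ) (ind ν) η * E u η t := by rw [hE, hsub]
      _ = ∑ η ∈ WU (N + M), x ξ * y ν * sh (ind ξ) (ind ν) η * E u η t := by
          rw [Finset.mul_sum]
          exact Finset.sum_congr rfl (fun η _ => by ring)
  rw [Finset.sum_congr rfl (fun ξ hξ => Finset.sum_congr rfl (fun ν hν => hterm ξ hξ ν hν)),
    Finset.sum_congr rfl (fun ξ _ => Finset.sum_comm), Finset.sum_comm]
  refine Finset.sum_congr rfl ?_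
  intro η _
  rw [sh_expand x y N M hx hy η, Finset.sum_mul]
  refine Finset.sum_congr rfl ?_
  intro ξ _
  rw [Finset.sum_mul]

/-! ### Degree components -/

def eC (e : Series) (m : ℕ) : Series := fun η => if degW η = m then e η else 0

lemma eC_apply (e : Series) (m : ℕ) (η : Word) :
    eC e m η = if degW η = m then e η else 0 := rfl

lemma eC_supp_deg {e : Series} {m : ℕ} {w : Word} (h : eC e m w ≠ 0) : degW w = m := by
  by_contra hc
  exact h (by rw [eC_apply, if_neg hc])

lemma eC_supp_len {e : Series} (m : ℕ) : ∀ w : Word, eC e m w ≠ 0 → w.length ≤ m := by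
  intro w h
  have hd := eC_supp_deg h
  have := length_le_degw w
  rw [degW_eq] at hd
  omega

lemma sh_eC_supp {e : Series} {i j : ℕ} {τ : Word} (h : sh (eC e i) (eC e j) τ ≠ 0) :
    degw τ + 2 = i + j ∧ τ.length ≤ i + j := by
  obtain ⟨v1, v2, h1, h2, hdeg, hlen⟩ := sh_supp τ _ _ h
  have d1 := eC_supp_deg h1
  have d2 := eC_supp_deg h2
  rw [degW_eq] at d1 d2
  have l1 := length_le_degw v1
  have l2 := length_le_degw v2
  omega

lemma sh_eC_supp_len {e : Series} (i j : ℕ) : ∀ τ : Word,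
    sh (eC e i) (eC e j) τ ≠ 0 → τ.length ≤ i + j :=
  fun τ h => (sh_eC_supp h).2

lemma sh3_eC_supp {e : Series} {i j k : ℕ} {τ : Word}
    (h : sh (sh (eC e i) (eC e j)) (eC e k) τ ≠ 0) :
    degw τ + 3 = i + j + k ∧ τ.length ≤ i + j + k := by
  obtain ⟨v1, v2, h1, h2, hdeg, hlen⟩ := sh_supp τ _ _ h
  obtain ⟨d1, l1⟩ := sh_eC_supp h1
  have d2 := eC_supp_deg h2
  rw [degW_eq] at d2
  have l2 := length_le_degw v2
  have l1' := length_le_degw v1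
  omega

/-! ### Sums over antidiagonals vs. ranges -/

lemma pair_sum (h : ℕ → ℕ → ℝ) (m D : ℕ) (hm : m ≤ D)
    (hv : ∀ i j, h i j ≠ 0 → i + j = m) :
    ∑ p ∈ Finset.HasAntidiagonal.antidiagonal m, h p.1 p.2
      = ∑ i ∈ Finset.range (D+1), ∑ j ∈ Finset.range (D+1), h i j := by
  rw [← Finset.sum_product']
  apply Finset.sum_subset
  · intro p hp
    rw [Finset.HasAntidiagonal.mem_antidiagonal] at hp
    rw [Finset.mem_product, Finset.mem_range, Finset.mem_range]
    omega
  · intro p _ hp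
    by_contra hne
    exact hp (Finset.HasAntidiagonal.mem_antidiagonal.mpr (hv p.1 p.2 hne))

lemma sh_sum_left' {ι : Type*} (s : Finset ι) (f : ι → Series) (b : Series) :
    sh (∑ x ∈ s, f x) b = ∑ x ∈ s, sh (f x) b := by
  funext w
  rw [sh_sum_left, Finset.sum_apply]

lemma sh_sum_right' {ι : Type*} (s : Finset ι) (a : Series) (f : ι → Series) :
    sh a (∑ x ∈ s, f x) = ∑ x ∈ s, sh a (f x) := by
  funext w
  rw [sh_sum_right, Finset.sum_apply]
/-! ### The graded coefficient identities -/

lemma trunc_eq (e : Series) (L D : ℕ) (hD : 2 * L + 1 ≤ D) :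
    ∀ v : Word, v.length ≤ L → e v = (∑ m ∈ Finset.range (D+1), eC e m) v := by
  intro v hv
  rw [Finset.sum_apply]
  symm
  rw [Finset.sum_eq_single (degW v)]
  · rw [eC_apply, if_pos rfl]
  · intro m _ hne
    rw [eC_apply, if_neg (fun hc => hne hc.symm)]
  · intro hnm
    exfalso
    apply hnm
    rw [Finset.mem_range]
    have h2 := degw_le_two_mul_length v
    rw [degW_eq]
    omega

lemma degW_cons1 (τ : Word) : degW (1 :: τ) = degw τ + 2 := by
  rw [degW_eq, degw_cons, if_neg (by decide)]
  omega

lemma degW_cons0 (τ : Word) : degW (0 :: τ) = degw τ + 3 := by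
  rw [degW_eq, degw_cons, if_pos rfl]
  omega

lemma K2 {e : Series} (h1 : lshift 1 e = sh e e) (n : ℕ) (τ : Word) :
    lshift 1 (eC e n) τ
      = ∑ p ∈ Finset.HasAntidiagonal.antidiagonal n, sh (eC e p.1) (eC e p.2) τ := by
  have hL : lshift 1 (eC e n) τ = if degw τ + 2 = n then sh e e τ else 0 := by
    show eC e n (1 :: τ) = _
    rw [eC_apply, degW_cons1]
    by_cases hc : degw τ + 2 = n
    · rw [if_pos hc, if_pos hc]
      exact congrFun h1 τ
    · rw [if_neg hc, if_neg hc]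
  rw [hL]
  by_cases hc : degw τ + 2 = n
  · rw [if_pos hc]
    have hT := trunc_eq e τ.length (n + 2 * τ.length + 2) (by omega)
    have hsh : sh e e τ
        = sh (∑ m ∈ Finset.range (n + 2 * τ.length + 2 + 1), eC e m)
            (∑ m ∈ Finset.range (n + 2 * τ.length + 2 + 1), eC e m) τ :=
      sh_congr τ _ _ _ _ hT hT
    rw [hsh, sh_sum_left]
    rw [Finset.sum_congr rfl (fun i (_ : i ∈ Finset.range (n + 2 * τ.length + 2 + 1)) =>
      (sh_sum_right (Finset.range (n + 2 * τ.length + 2 + 1)) (eC e i) (eC e) τ))]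
    symm
    exact pair_sum (fun i j => sh (eC e i) (eC e j) τ) n (n + 2 * τ.length + 2) (by omega)
      (fun i j h => by have := (sh_eC_supp h).1; omega)
  · rw [if_neg hc]
    symm
    apply Finset.sum_eq_zero
    intro p hp
    rw [Finset.HasAntidiagonal.mem_antidiagonal] at hp
    by_contra hne
    exact hc (by have := (sh_eC_supp hne).1; omega)

lemma K3 {e : Series} (h0 : lshift 0 e = sh (sh e e) e) (n : ℕ) (τ : Word) :
    lshift 0 (eC e n) τ
      = ∑ p ∈ Finset.HasAntidiagonal.antidiagonal n, ∑ q ∈ Finset.HasAntidiagonal.antidiagonal p.2,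
          sh (sh (eC e p.1) (eC e q.1)) (eC e q.2) τ := by
  have hL : lshift 0 (eC e n) τ = if degw τ + 3 = n then sh (sh e e) e τ else 0 := by
    show eC e n (0 :: τ) = _
    rw [eC_apply, degW_cons0]
    by_cases hc : degw τ + 3 = n
    · rw [if_pos hc, if_pos hc]
      exact congrFun h0 τ
    · rw [if_neg hc, if_neg hc]
  rw [hL]
  by_cases hc : degw τ + 3 = n
  · rw [if_pos hc]
    set D := n + 2 * τ.length + 2 with hDdef
    set R := Finset.range (D + 1) with hR
    set eT : Series := ∑ m ∈ R, eC e m with heT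
    have hT : ∀ v : Word, v.length ≤ τ.length → e v = eT v :=
      trunc_eq e τ.length D (by omega)
    have hT2 : ∀ v : Word, v.length ≤ τ.length → sh e e v = sh eT eT v := by
      intro v hv
      exact sh_congr v _ _ _ _ (fun v' hv' => hT v' (le_trans hv' hv))
        (fun v' hv' => hT v' (le_trans hv' hv))
    have hsh : sh (sh e e) e τ = sh (sh eT eT) eT τ := sh_congr τ _ _ _ _ hT2 hT
    have hexp : sh (sh eT eT) eT τ
        = ∑ i ∈ R, ∑ j ∈ R, ∑ k ∈ R, sh (sh (eC e i) (eC e j)) (eC e k) τ := by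
      have e1 : sh eT eT = ∑ i ∈ R, ∑ j ∈ R, sh (eC e i) (eC e j) := by
        rw [heT, sh_sum_left']
        exact Finset.sum_congr rfl (fun i _ => sh_sum_right' R (eC e i) (eC e))
      rw [e1, sh_sum_left', Finset.sum_apply]
      refine Finset.sum_congr rfl ?_
      intro i _
      rw [sh_sum_left', Finset.sum_apply]
      refine Finset.sum_congr rfl ?_
      intro j _
      rw [sh_sum_right', Finset.sum_apply]
    have hconv : ∑ p ∈ Finset.HasAntidiagonal.antidiagonal n, ∑ q ∈ Finset.HasAntidiagonal.antidiagonal p.2,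
          sh (sh (eC e p.1) (eC e q.1)) (eC e q.2) τ
        = ∑ i ∈ R, ∑ j ∈ R, ∑ k ∈ R, sh (sh (eC e i) (eC e j)) (eC e k) τ := by
      have hinner : ∀ p ∈ Finset.HasAntidiagonal.antidiagonal n,
          (∑ q ∈ Finset.HasAntidiagonal.antidiagonal p.2, sh (sh (eC e p.1) (eC e q.1)) (eC e q.2) τ)
            = ∑ j ∈ R, ∑ k ∈ R, sh (sh (eC e p.1) (eC e j)) (eC e k) τ := by
        intro p hp
        rw [Finset.HasAntidiagonal.mem_antidiagonal] at hp
        exact pair_sum (fun j k => sh (sh (eC e p.1) (eC e j)) (eC e k) τ) p.2 D (by omega)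
          (fun j k h => by have := (sh3_eC_supp h).1; omega)
      rw [Finset.sum_congr rfl hinner, Finset.Nat.sum_antidiagonal_eq_sum_range_succ_mk]
      apply Finset.sum_subset
      · intro i hi
        rw [Finset.mem_range] at *
        omega
      · intro i _ hi
        rw [Finset.mem_range] at hi
        apply Finset.sum_eq_zero
        intro j _
        apply Finset.sum_eq_zero
        intro k _
        by_contra hne
        have := (sh3_eC_supp hne).1
        omega
    rw [hsh, hexp, hconv]
  · rw [if_neg hc]
    symm
    apply Finset.sum_eq_zero
    intro p hp
    apply Finset.sum_eq_zero
    intro q hq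
    rw [Finset.HasAntidiagonal.mem_antidiagonal] at hp hq
    by_contra hne
    exact hc (by have := (sh3_eC_supp hne).1; omega)
/-! ### The master lemma -/

lemma master {e : Series} (he0 : e [] = 1) (h1 : lshift 1 e = sh e e)
    (h0 : lshift 0 e = sh (sh e e) e)
    (ω : ℝ) (hω : 0 < ω) (α β : ℝ → ℝ)
    (hα : ContinuousOn α (Set.Icc 0 ω)) (hβ : ContinuousOn β (Set.Icc 0 ω)) :
    let u : Fin 2 → ℝ → ℝ := ![α, β]
    let A : ℕ → ℝ → ℝ := fun n t =>
      ∑' η : Word, (if degW η = n then e η else 0) * E u η t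
    (A 1 0 = 1) ∧
    (∀ n : ℕ, 1 < n → A n 0 = 0) ∧
    (∀ n : ℕ, 1 ≤ n → ContinuousOn (A n) (Set.Icc 0 ω)) ∧
    (∀ n : ℕ, 1 ≤ n → ∀ t ∈ Set.Icc (0:ℝ) ω,
      HasDerivWithinAt (A n)
        (α t * ∑ p ∈ Finset.HasAntidiagonal.antidiagonal n, ∑ q ∈ Finset.HasAntidiagonal.antidiagonal p.2,
            A p.1 t * A q.1 t * A q.2 t
         + β t * ∑ p ∈ Finset.HasAntidiagonal.antidiagonal n, A p.1 t * A p.2 t)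
        (Set.Icc 0 ω) t) := by
  intro u A
  have h0ω : (0:ℝ) ≤ ω := hω.le
  set ue : Fin 2 → ℝ → ℝ :=
    ![fun t => α ((Set.projIcc (0:ℝ) ω h0ω t : Set.Icc (0:ℝ) ω) : ℝ),
      fun t => β ((Set.projIcc (0:ℝ) ω h0ω t : Set.Icc (0:ℝ) ω) : ℝ)] with hue_def
  have hue : ∀ i, Continuous (ue i) := by
    intro i
    fin_cases i
    · show Continuous fun t => α ((Set.projIcc (0:ℝ) ω h0ω t : Set.Icc (0:ℝ) ω) : ℝ)
      exact hα.comp_continuous (continuous_subtype_val.comp continuous_projIcc)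
        (fun x => (Set.projIcc (0:ℝ) ω h0ω x).2)
    · show Continuous fun t => β ((Set.projIcc (0:ℝ) ω h0ω t : Set.Icc (0:ℝ) ω) : ℝ)
      exact hβ.comp_continuous (continuous_subtype_val.comp continuous_projIcc)
        (fun x => (Set.projIcc (0:ℝ) ω h0ω x).2)
  have hagree : ∀ i : Fin 2, ∀ s ∈ Set.Icc (0:ℝ) ω, u i s = ue i s := by
    intro i s hs
    fin_cases i
    · show α s = α ((Set.projIcc (0:ℝ) ω h0ω s : Set.Icc (0:ℝ) ω) : ℝ)
      rw [Set.projIcc_of_mem h0ω hs]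
    · show β s = β ((Set.projIcc (0:ℝ) ω h0ω s : Set.Icc (0:ℝ) ω) : ℝ)
      rw [Set.projIcc_of_mem h0ω hs]
  have hA : ∀ (n : ℕ) (t : ℝ), A n t = ∑ η ∈ WU n, eC e n η * E u η t := by
    intro n t
    have h := tsum_eq_sum (f := fun η : Word => (if degW η = n then e η else 0) * E u η t)
      (s := WU n) (L := SummationFilter.unconditional Word) ?_
    · rw [show A n t = ∑' η : Word, (if degW η = n then e η else 0) * E u η t from rfl, h]
      exact Finset.sum_congr rfl (fun η _ => by rw [eC_apply])
    · intro η hη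
      rw [mem_WU] at hη
      have hne : degW η ≠ n := by
        intro hcn
        have hl := length_le_degw η
        rw [degW_eq] at hcn
        omega
      show (if degW η = n then e η else 0) * E u η t = 0
      rw [if_neg hne, zero_mul]
  set An : ℕ → ℝ → ℝ := fun m t => ∑ η ∈ WU m, eC e m η * E ue η t with hAn_def
  have hAeq : ∀ (n : ℕ), ∀ t ∈ Set.Icc (0:ℝ) ω, A n t = An n t := by
    intro n t ht
    rw [hA n t]
    exact Finset.sum_congr rfl (fun η _ => by rw [E_congr hagree η t ht])
  have hval0 : ∀ n : ℕ, A n 0 = (if 1 = n then e [] else 0) := by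
    intro n
    rw [hA n 0, Finset.sum_eq_single ([] : Word)]
    · rw [eC_apply, E_nil, mul_one, show degW ([] : Word) = 1 from rfl]
    · intro η _ hne
      rw [E_zero_of_ne_nil u hne, mul_zero]
    · intro hnm
      exact absurd (mem_WU.mpr (by simp)) hnm
  have hcontAn : ∀ m, Continuous (An m) := by
    intro m
    show Continuous fun t => ∑ η ∈ WU m, eC e m η * E ue η t
    apply continuous_finset_sum
    intro η _
    exact continuous_const.mul (E_continuous hue η)
  have hder : ∀ n : ℕ, 1 ≤ n → ∀ t ∈ Set.Icc (0:ℝ) ω,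
      HasDerivWithinAt (A n)
        (α t * ∑ p ∈ Finset.HasAntidiagonal.antidiagonal n, ∑ q ∈ Finset.HasAntidiagonal.antidiagonal p.2,
            A p.1 t * A q.1 t * A q.2 t
         + β t * ∑ p ∈ Finset.HasAntidiagonal.antidiagonal n, A p.1 t * A p.2 t)
        (Set.Icc 0 ω) t := by
    intro n hn t ht
    have hDAn : HasDerivAt (An n) (∑ η ∈ WU n, eC e n η * ED ue η t) t := by
      show HasDerivAt (fun s => ∑ η ∈ WU n, eC e n η * E ue η s) _ t
      apply HasDerivAt.fun_sum
      intro η _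
      exact (E_hasDerivAt hue η t).const_mul _
    have htriple : ∀ p ∈ Finset.HasAntidiagonal.antidiagonal n, ∀ q ∈ Finset.HasAntidiagonal.antidiagonal p.2,
        An p.1 t * An q.1 t * An q.2 t
          = ∑ τ ∈ WU n, sh (sh (eC e p.1) (eC e q.1)) (eC e q.2) τ * E ue τ t := by
      intro p hp q hq
      rw [Finset.HasAntidiagonal.mem_antidiagonal] at hp hq
      have h12 := FS_mul hue (eC e p.1) (eC e q.1) p.1 q.1
        (eC_supp_len p.1) (eC_supp_len q.1) t
      have h123 := FS_mul hue (sh (eC e p.1) (eC e q.1)) (eC e q.2) (p.1 + q.1) q.2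
        (sh_eC_supp_len p.1 q.1) (eC_supp_len q.2) t
      show (∑ η ∈ WU p.1, eC e p.1 η * E ue η t) * (∑ η ∈ WU q.1, eC e q.1 η * E ue η t)
          * (∑ η ∈ WU q.2, eC e q.2 η * E ue η t) = _
      rw [h12, h123, show p.1 + q.1 + q.2 = n from by omega]
    have hdouble : ∀ p ∈ Finset.HasAntidiagonal.antidiagonal n,
        An p.1 t * An p.2 t = ∑ τ ∈ WU n, sh (eC e p.1) (eC e p.2) τ * E ue τ t := by
      intro p hp
      rw [Finset.HasAntidiagonal.mem_antidiagonal] at hp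
      have h12 := FS_mul hue (eC e p.1) (eC e p.2) p.1 p.2
        (eC_supp_len p.1) (eC_supp_len p.2) t
      show (∑ η ∈ WU p.1, eC e p.1 η * E ue η t) * (∑ η ∈ WU p.2, eC e p.2 η * E ue η t) = _
      rw [h12, show p.1 + p.2 = n from hp]
    have hT3 : (∑ p ∈ Finset.HasAntidiagonal.antidiagonal n, ∑ q ∈ Finset.HasAntidiagonal.antidiagonal p.2,
          An p.1 t * An q.1 t * An q.2 t)
        = ∑ τ ∈ WU n, lshift 0 (eC e n) τ * E ue τ t := by
      rw [Finset.sum_congr rfl (fun p hp =>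
          Finset.sum_congr rfl (fun q hq => htriple p hp q hq)),
        Finset.sum_congr rfl (fun p (_ : p ∈ Finset.HasAntidiagonal.antidiagonal n) => Finset.sum_comm),
        Finset.sum_comm]
      refine Finset.sum_congr rfl ?_
      intro τ _
      rw [K3 h0 n τ, Finset.sum_mul]
      refine Finset.sum_congr rfl ?_
      intro p _
      rw [Finset.sum_mul]
    have hT2 : (∑ p ∈ Finset.HasAntidiagonal.antidiagonal n, An p.1 t * An p.2 t)
        = ∑ τ ∈ WU n, lshift 1 (eC e n) τ * E ue τ t := by
      rw [Finset.sum_congr rfl hdouble, Finset.sum_comm]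
      refine Finset.sum_congr rfl ?_
      intro τ _
      rw [K2 h1 n τ, Finset.sum_mul]
    obtain ⟨n', rfl⟩ : ∃ n', n = n' + 1 := ⟨n - 1, by omega⟩
    have hDval : (∑ η ∈ WU (n' + 1), eC e (n' + 1) η * ED ue η t)
        = ue 0 t * (∑ τ ∈ WU (n' + 1), lshift 0 (eC e (n' + 1)) τ * E ue τ t)
          + ue 1 t * (∑ τ ∈ WU (n' + 1), lshift 1 (eC e (n' + 1)) τ * E ue τ t) := by
      rw [sum_WU_succ]
      have hnil : eC e (n' + 1) [] * ED ue [] t = 0 := by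
        show _ * 0 = 0; ring
      have hc0 : ∀ τ : Word, eC e (n' + 1) (0 :: τ) * ED ue (0 :: τ) t
          = lshift 0 (eC e (n' + 1)) τ * E ue τ t * ue 0 t := by
        intro τ
        show eC e (n' + 1) (0 :: τ) * (ue 0 t * E ue τ t) = _
        rw [show lshift 0 (eC e (n' + 1)) τ = eC e (n' + 1) (0 :: τ) from rfl]
        ring
      have hc1 : ∀ τ : Word, eC e (n' + 1) (1 :: τ) * ED ue (1 :: τ) t
          = lshift 1 (eC e (n' + 1)) τ * E ue τ t * ue 1 t := by
        intro τ
        show eC e (n' + 1) (1 :: τ) * (ue 1 t * E ue τ t) = _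
        rw [show lshift 1 (eC e (n' + 1)) τ = eC e (n' + 1) (1 :: τ) from rfl]
        ring
      rw [hnil, zero_add, Finset.sum_congr rfl (fun τ _ => hc0 τ),
        Finset.sum_congr rfl (fun τ _ => hc1 τ), ← Finset.sum_mul, ← Finset.sum_mul]
      have hext0 : (∑ τ ∈ WU n', lshift 0 (eC e (n' + 1)) τ * E ue τ t)
          = ∑ τ ∈ WU (n' + 1), lshift 0 (eC e (n' + 1)) τ * E ue τ t := by
        apply Finset.sum_subset
        · intro w hw; exact mem_WU.mpr (le_trans (mem_WU.mp hw) (by omega))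
        · intro w _ hw2
          rcases eq_or_ne (lshift 0 (eC e (n' + 1)) w) 0 with hz | hz
          · rw [hz, zero_mul]
          · exfalso
            have hlen := eC_supp_len (n' + 1) (0 :: w) hz
            simp only [List.length_cons] at hlen
            exact hw2 (mem_WU.mpr (by omega))
      have hext1 : (∑ τ ∈ WU n', lshift 1 (eC e (n' + 1)) τ * E ue τ t)
          = ∑ τ ∈ WU (n' + 1), lshift 1 (eC e (n' + 1)) τ * E ue τ t := by
        apply Finset.sum_subset
        · intro w hw; exact mem_WU.mpr (le_trans (mem_WU.mp hw) (by omega))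
        · intro w _ hw2
          rcases eq_or_ne (lshift 1 (eC e (n' + 1)) w) 0 with hz | hz
          · rw [hz, zero_mul]
          · exfalso
            have hlen := eC_supp_len (n' + 1) (1 :: w) hz
            simp only [List.length_cons] at hlen
            exact hw2 (mem_WU.mpr (by omega))
      rw [hext0, hext1]
      ring
    have hval : (∑ η ∈ WU (n' + 1), eC e (n' + 1) η * ED ue η t)
        = α t * (∑ p ∈ Finset.HasAntidiagonal.antidiagonal (n' + 1), ∑ q ∈ Finset.HasAntidiagonal.antidiagonal p.2,
            A p.1 t * A q.1 t * A q.2 t)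
          + β t * (∑ p ∈ Finset.HasAntidiagonal.antidiagonal (n' + 1), A p.1 t * A p.2 t) := by
      rw [hDval, ← hT3, ← hT2,
        ← (show α t = ue 0 t from hagree 0 t ht),
        ← (show β t = ue 1 t from hagree 1 t ht)]
      congr 1
      · congr 1
        refine Finset.sum_congr rfl ?_
        intro p _
        refine Finset.sum_congr rfl ?_
        intro q _
        rw [hAeq p.1 t ht, hAeq q.1 t ht, hAeq q.2 t ht]
      · congr 1
        refine Finset.sum_congr rfl ?_
        intro p _
        rw [hAeq p.1 t ht, hAeq p.2 t ht]
    have hfinal : HasDerivWithinAt (An (n' + 1))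
        (α t * ∑ p ∈ Finset.HasAntidiagonal.antidiagonal (n' + 1), ∑ q ∈ Finset.HasAntidiagonal.antidiagonal p.2,
            A p.1 t * A q.1 t * A q.2 t
         + β t * ∑ p ∈ Finset.HasAntidiagonal.antidiagonal (n' + 1), A p.1 t * A p.2 t)
        (Set.Icc 0 ω) t := by
      have h' := hDAn.hasDerivWithinAt (s := Set.Icc 0 ω)
      rwa [hval] at h'
    exact hfinal.congr (fun s hs => hAeq (n' + 1) s hs) (hAeq (n' + 1) t ht)
  refine ⟨?_, ?_, ?_, hder⟩
  · rw [hval0 1, if_pos rfl]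
    exact he0
  · intro n hn
    rw [hval0 n, if_neg (by omega)]
  · intro n _
    exact ((hcontAn n).continuousOn).congr (fun s hs => hAeq n s hs)
end Paper

open Paper in
/-- Let `c = Σ_{k≥0} k! x1^k` be the Ferfera series and for `n ≥ 1` let
`a_n := Σ_{η : deg(η) = n} (S a_η)(−c) · η` be the degree-`n` homogeneous component of the
group inverse `(−c)^{∘−1}`.  Then for continuous functions `α, β` on `[0, ω]` and inputs
`u := (u0, u1) = (α, β)`, the functions `a_n(t) := F_{a_n}[u](t)` are exactly the
coefficient functions of the formal power series solution `Φ(t;0;r;u) = Σ_{n≥1} a_n(t) rⁿ`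
of the Abel equation `ż = α z³ + β z²`, `z(0) = r`:  they are continuous, satisfy
`a_1(0) = 1` and `a_n(0) = 0` for `n > 1`, and satisfy the ODE order by order in `r`,
i.e. `a_n' = α Σ_{i+j+k=n} a_i a_j a_k + β Σ_{i+j=n} a_i a_j` on `[0, ω]`. -/
theorem devlin_polynomials_solve_abel_equation
    (Δ : H →ₐ[ℝ] (H ⊗[ℝ] H)) (hΔ : IsFBCoproduct Δ)
    (S : H →ₗ[ℝ] H) (hS : IsAntipode Δ S)
    (ω : ℝ) (hω : 0 < ω) (α β : ℝ → ℝ)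
    (hα : ContinuousOn α (Set.Icc 0 ω)) (hβ : ContinuousOn β (Set.Icc 0 ω)) :
    let u : Fin 2 → ℝ → ℝ := ![α, β]
    let A : ℕ → ℝ → ℝ := fun n t =>
      ∑' η : Word, (if degW η = n then evalS (-ferfera) (S (aw η)) else 0) * E u η t
    (A 1 0 = 1) ∧
    (∀ n : ℕ, 1 < n → A n 0 = 0) ∧
    (∀ n : ℕ, 1 ≤ n → ContinuousOn (A n) (Set.Icc 0 ω)) ∧
    (∀ n : ℕ, 1 ≤ n → ∀ t ∈ Set.Icc (0:ℝ) ω,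
      HasDerivWithinAt (A n)
        (α t * ∑ p ∈ Finset.HasAntidiagonal.antidiagonal n, ∑ q ∈ Finset.HasAntidiagonal.antidiagonal p.2,
            A p.1 t * A q.1 t * A q.2 t
         + β t * ∑ p ∈ Finset.HasAntidiagonal.antidiagonal n, A p.1 t * A p.2 t)
        (Set.Icc 0 ω) t) := by
  have hkey := key_recursion Δ hΔ S hS
  exact master (e_nil_eq_one hkey) (e_lshift1 hkey) (e_lshift0 hkey) ω hω α β hα hβ
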